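/- For all integers w, t, I, and α with α ≥ 0, t ≥ 0, w + α ≥ 0, and I ≥ 1, one has Q(w,t,I,α) = 0. -/

import Mathlib

/-- The generalized binomial coefficient `C(a,b)` for integers `a`, `b`:
`C(a,b) = 0` if `b < 0`, and `C(a,b) = a(a-1)⋯(a-b+1)/b!` if `b ≥ 0`. -/
noncomputable def binom (a b : ℤ) : ℤ := if b < 0 then 0 else Ring.choose a b.toNat

/-- The integer `Q(w,t,I,α)` from Definition 3.1 of the paper (intended for `0 ≤ α`). -/
noncomputable def Q (w t I α : ℤ) : ℤ :=
  if α = 0 then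
    -(∑ᶠ i : ℤ, binom (I - 1) (w - i) * binom (i + I - w - 2) i * binom t (I - i))
    + (∑ᶠ i ∈ Set.Iic w,
        ((i + w + 1).negOnePow : ℤ) * binom (2 * i - w - 2 + t) (2 * i - w - 1) * binom t (I - i))
    + (∑ᶠ i ∈ Set.Iic w,
        ((i + w).negOnePow : ℤ) * binom (t + i - 1) i * binom t (I - i))
  else
    -(∑ᶠ i : ℤ, binom (I - 1) (w - i) * binom (i + I - w - 2) i * binom t (I - i - α))
    + (∑ᶠ i ∈ Set.Iic w,
        ((i + w + 1 + α).negOnePow : ℤ) * binom (2 * i - w - 2 + t + α) (2 * i - w - 1 + α) *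
          binom t (I - i - α))
    + (∑ i ∈ Finset.Icc (1 : ℤ) (α - 1),
        ((i + 1).negOnePow : ℤ) * binom (I - 1) (w + i) * binom (t + w + i) (I - α + i))



namespace QZero

noncomputable abbrev ch (a : ℤ) (n : ℕ) : ℤ := Ring.choose a n

lemma binom_of_neg {b : ℤ} (hb : b < 0) (a : ℤ) : binom a b = 0 := if_pos hb

lemma binom_natCast (a : ℤ) (n : ℕ) : binom a n = ch a n := by
  simp [binom, ch]

lemma ch_pascal (a : ℤ) (n : ℕ) : ch (a + 1) (n + 1) = ch a n + ch a (n + 1) :=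
  Ring.choose_succ_succ a n

lemma ch_natCast (n k : ℕ) : ch (n : ℤ) k = n.choose k := Ring.choose_natCast n k

lemma ch_zero_right (a : ℤ) : ch a 0 = 1 := Ring.choose_zero_right a

lemma ch_one_right (a : ℤ) : ch a 1 = a := Ring.choose_one_right a

lemma ch_eq_zero_of_lt {n k : ℕ} (h : n < k) : ch (n : ℤ) k = 0 := by
  rw [ch_natCast, Nat.choose_eq_zero_of_lt h, Nat.cast_zero]

lemma binom_eq_zero_of_lt {a b : ℤ} (ha : 0 ≤ a) (h : a < b) : binom a b = 0 := by
  have hb : ¬ b < 0 := by omega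
  rw [binom, if_neg hb]
  have : a = ((a.toNat : ℕ) : ℤ) := by omega
  rw [this]
  exact ch_eq_zero_of_lt (by omega)

/-- reflection: C(a,n) = (-1)^n C(n-1-a, n) -/
lemma ch_reflect (a : ℤ) (n : ℕ) : ch a n = (-1) ^ n * ch ((n : ℤ) - 1 - a) n := by
  refine nsmul_right_injective n.factorial_ne_zero ?_
  simp only
  rw [← Ring.descPochhammer_eq_factorial_smul_choose,
    Polynomial.descPochhammer_smeval_eq_ascPochhammer]
  have h1 : a - n + 1 = -((n:ℤ) - 1 - a) := by ring
  rw [h1, Polynomial.ascPochhammer_smeval_neg_eq_descPochhammer,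
    Ring.descPochhammer_eq_factorial_smul_choose]
  simp only [nsmul_eq_mul]
  rw [Units.smul_def, Int.coe_negOnePow_natCast, smul_eq_mul]
  ring

/-- Pascal for binom, all integers: C(a+1, b) = C(a, b-1) + C(a, b) -/
lemma binom_pascal (a b : ℤ) : binom (a + 1) b = binom a (b - 1) + binom a b := by
  rcases lt_trichotomy b 0 with hb | hb | hb
  · rw [binom_of_neg hb, binom_of_neg (by omega), binom_of_neg hb]; ring
  · subst hb
    simp [binom, binom_of_neg (show (0:ℤ) - 1 < 0 by norm_num), ch_zero_right]
  · have h1 : b = ((b.toNat - 1 : ℕ) : ℤ) + 1 := by omega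
    have h2 : b - 1 = ((b.toNat - 1 : ℕ) : ℤ) := by omega
    rw [h2, binom_natCast]
    have h3 : binom (a+1) b = ch (a+1) ((b.toNat - 1) + 1) := by
      rw [binom, if_neg (by omega)]
      congr 1
      omega
    have h4 : binom a b = ch a ((b.toNat - 1) + 1) := by
      rw [binom, if_neg (by omega)]
      congr 1
      omega
    rw [h3, h4, ch_pascal]

/-- C(-t-1, n) = (-1)^n C(t+n, n) for t n : ℕ -/
lemma ch_neg_succ (t : ℕ) (n : ℕ) : ch (-(t:ℤ) - 1) n = (-1) ^ n * ch ((t : ℤ) + n) n := by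
  rw [ch_reflect (-(t:ℤ)-1) n]
  congr 2
  ring

/-- C(t + n - 1, n) = (-1)^n C(-t, n) -/
lemma ch_shift_reflect (t : ℕ) (n : ℕ) : ch ((t : ℤ) + n - 1) n = (-1) ^ n * ch (-(t:ℤ)) n := by
  rw [ch_reflect (-(t:ℤ)) n]
  have : (n : ℤ) - 1 - (-(t:ℤ)) = (t:ℤ) + n - 1 := by ring
  rw [this, ← mul_assoc, ← pow_add, ← two_mul, pow_mul]
  norm_num

end QZero

section part1
open Finset
namespace QZero

/-- partial alternating sum: `∑_{s=0}^{k} (-1)^s C(a,s) = (-1)^k C(a-1,k)` -/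
lemma alt_partial_sum (a : ℤ) (k : ℕ) :
    ∑ s ∈ range (k+1), (-1:ℤ)^s * ch a s = (-1)^k * ch (a-1) k := by
  induction k with
  | zero => simp [ch_zero_right]
  | succ k ih =>
      rw [sum_range_succ, ih]
      have h : ch a (k+1) = ch (a-1) k + ch (a-1) (k+1) := by
        have := ch_pascal (a-1) k
        rwa [sub_add_cancel] at this
      rw [h]; ring

/-- trinomial revision: `C(r,j) C(a,r) = C(a,j) C(a-j, r-j)` -/
lemma trinomial (a : ℤ) (r j : ℕ) :
    (r.choose j : ℤ) * ch a r = ch a j * binom (a - j) ((r:ℤ) - (j:ℤ)) := by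
  rcases le_or_gt j r with h | h
  · have h2 := Ring.choose_smul_choose a (n := r) (k := j) h
    have h3 : binom (a - j) ((r:ℤ) - (j:ℤ)) = ch (a - j) (r - j) := by
      have : ((r:ℤ) - (j:ℤ)) = ((r - j : ℕ) : ℤ) := by omega
      rw [this, binom_natCast]
    rw [h3, ← h2, nsmul_eq_mul]
  · rw [Nat.choose_eq_zero_of_lt h, binom_of_neg (by omega)]
    push_cast
    ring

/-- absorption / subset-of-subset: `C(t+n, n) C(t, K) = C(n+K, n) C(t+n, K+n)` -/
lemma lemX (n t : ℕ) (K : ℤ) :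
    ch ((t:ℤ) + n) n * binom t K = ch ((n:ℤ) + K) n * binom ((t:ℤ) + n) (K + n) := by
  rcases lt_or_ge K 0 with hK | hK
  · rw [binom_of_neg hK]
    rcases lt_or_ge (K + n) 0 with hKn | hKn
    · rw [binom_of_neg hKn]; ring
    · have h1 : ((n:ℤ) + K) = (((K + n).toNat : ℕ) : ℤ) := by omega
      rw [h1, ch_eq_zero_of_lt (by omega)]
      ring
  · set k := K.toNat with hk
    have hKk : K = (k : ℤ) := by omega
    have h2 := Ring.choose_add_smul_choose ((t:ℤ)) k n
    -- (Nat.choose (k + n) n) • choose ((t:ℤ) + n) (k + n) = choose ((t:ℤ) + n) n * choose (t:ℤ) k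
    have h3 : binom t K = ch t k := by rw [hKk, binom_natCast]
    have h4 : binom ((t:ℤ) + n) (K + n) = ch ((t:ℤ) + n) (k + n) := by
      have : K + n = ((k + n : ℕ) : ℤ) := by omega
      rw [this, binom_natCast]
    have h5 : ch ((n:ℤ) + K) n = ((k+n).choose n : ℤ) := by
      have : (n:ℤ) + K = ((k + n : ℕ) : ℤ) := by omega
      rw [this, ch_natCast]
    rw [h3, h4, h5, ← h2, nsmul_eq_mul]

/-- Vandermonde, split form: `C(t+r, K+r) = ∑_j C(r,j) C(t, K+j)` -/
lemma vandermonde_split (t r : ℕ) (K : ℤ) :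
    binom ((t:ℤ) + r) (K + r) =
      ∑ j ∈ range (r+1), (r.choose j : ℤ) * binom t (K + j) := by
  rcases lt_or_ge (K + r) 0 with hKr | hKr
  · rw [binom_of_neg hKr]
    refine (Finset.sum_eq_zero ?_).symm
    intro j hj
    rw [mem_range] at hj
    rw [binom_of_neg (by omega)]
    ring
  · set n := (K + r).toNat with hn
    have hKn : K + r = (n : ℤ) := by omega
    -- RHS rewrite via reflection of the range
    have hRHS : ∑ j ∈ range (r+1), (r.choose j : ℤ) * binom t (K + j)
        = ∑ k ∈ range (r+1), (r.choose k : ℤ) * binom t ((n:ℤ) - k) := by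
      rw [← Finset.sum_range_reflect]
      refine Finset.sum_congr rfl ?_
      intro k hk
      rw [mem_range] at hk
      have h1 : r + 1 - 1 - k = r - k := by omega
      rw [h1, Nat.choose_symm (by omega)]
      congr 2
      omega
    have hLHS : binom ((t:ℤ) + r) (K + r)
        = ∑ k ∈ range (n+1), ((r.choose k : ℕ) : ℤ) * binom t ((n:ℤ) - k) := by
      rw [hKn, binom_natCast]
      have hadd := Ring.add_choose_eq (r := ((t:ℕ):ℤ)) (s := ((r:ℕ):ℤ)) n (mul_comm _ _)
      rw [show ch ((t:ℤ) + (r:ℤ)) n = Ring.choose ((t:ℤ) + (r:ℤ)) n from rfl, hadd]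
      rw [Finset.Nat.sum_antidiagonal_eq_sum_range_succ_mk]
      rw [← Finset.sum_range_reflect]
      refine Finset.sum_congr rfl ?_
      intro k hk
      rw [mem_range] at hk
      have h1 : n + 1 - 1 - k = n - k := by omega
      have h2 : n - (n - k) = k := by omega
      rw [h1, h2]
      have h3 : binom t ((n:ℤ) - k) = ch t (n - k) := by
        have : (n:ℤ) - k = ((n - k : ℕ) : ℤ) := by omega
        rw [this, binom_natCast]
      rw [h3]
      simp only [ch_natCast]
      ring
    rw [hRHS, hLHS]
    -- both extend to range (max n r + 1)
    rcases le_or_gt n r with h | h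
    · refine Finset.sum_subset (by intro x hx; rw [mem_range] at *; omega) ?_
      intro x hx1 hx2
      rw [mem_range] at hx1 hx2
      rw [binom_of_neg (by omega)]
      ring
    · refine (Finset.sum_subset (by intro x hx; rw [mem_range] at *; omega) ?_).symm
      intro x hx1 hx2
      rw [mem_range] at hx1 hx2
      rw [Nat.choose_eq_zero_of_lt (by omega), Nat.cast_zero, zero_mul]

end QZero
end part1

section part2
open Finset
namespace QZero

lemma binom_congr {a a' b b' : ℤ} (h1 : a = a') (h2 : b = b') : binom a b = binom a' b' := by
  rw [h1, h2]

lemma ch_congr {a a' : ℤ} {n n' : ℕ} (h1 : a = a') (h2 : n = n') : ch a n = ch a' n' := by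
  rw [h1, h2]

lemma binom_zero_right (a : ℤ) : binom a 0 = 1 := by
  rw [show (0:ℤ) = ((0:ℕ):ℤ) from rfl, binom_natCast, ch_zero_right]

/-- `Asum N K t = ∑_{r<N} (-1)^r C(K+N-1, r) C(t+r, K+r)` -/
noncomputable def Asum (N : ℕ) (K : ℤ) (t : ℕ) : ℤ :=
  ∑ r ∈ range N, (-1:ℤ)^r * ch (K + N - 1) r * binom ((t:ℤ) + r) (K + r)

/-- `Bsum N K t = ∑_{j<N} (-1)^j C(-t, N-1-2j) C(t, K+j)` -/
noncomputable def Bsum (N : ℕ) (K : ℤ) (t : ℕ) : ℤ :=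
  ∑ j ∈ range N, (-1:ℤ)^j * binom (-(t:ℤ)) ((N:ℤ) - 1 - 2*j) * binom t (K + j)

lemma Asum_zero (K : ℤ) (t : ℕ) : Asum 0 K t = 0 := by simp [Asum]

lemma Bsum_zero (K : ℤ) (t : ℕ) : Bsum 0 K t = 0 := by simp [Bsum]

lemma Asum_one (K : ℤ) (t : ℕ) : Asum 1 K t = binom t K := by
  simp [Asum, ch_zero_right]

lemma Bsum_one (K : ℤ) (t : ℕ) : Bsum 1 K t = binom t K := by
  rw [Bsum, Finset.sum_range_one]
  rw [show ((1:ℕ):ℤ) - 1 - 2*((0:ℕ):ℤ) = 0 by norm_num, binom_zero_right]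
  rw [show K + ((0:ℕ):ℤ) = K by push_cast; ring]
  ring

lemma Asum_two (K : ℤ) (t : ℕ) :
    Asum 2 K t = binom t K - (K+1) * binom ((t:ℤ)+1) (K+1) := by
  rw [Asum, Finset.sum_range_succ, Finset.sum_range_one]
  rw [show K + ((2:ℕ):ℤ) - 1 = K + 1 by push_cast; ring, ch_zero_right, ch_one_right]
  rw [binom_congr (a := (t:ℤ) + ((0:ℕ):ℤ)) (by push_cast; ring : (t:ℤ) + ((0:ℕ):ℤ) = (t:ℤ))
    (by push_cast; ring : K + ((0:ℕ):ℤ) = K)]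
  rw [binom_congr (a := (t:ℤ) + ((1:ℕ):ℤ)) (by push_cast; ring : (t:ℤ) + ((1:ℕ):ℤ) = (t:ℤ)+1)
    (by push_cast; ring : K + ((1:ℕ):ℤ) = K+1)]
  ring

lemma Bsum_two (K : ℤ) (t : ℕ) : Bsum 2 K t = -(t:ℤ) * binom t K := by
  rw [Bsum, Finset.sum_range_succ, Finset.sum_range_one]
  rw [binom_congr (a := -(t:ℤ)) (rfl) (by norm_num : ((2:ℕ):ℤ) - 1 - 2*((0:ℕ):ℤ) = ((1:ℕ):ℤ))]
  rw [binom_congr (a := -(t:ℤ)) (rfl) (by norm_num : ((2:ℕ):ℤ) - 1 - 2*((1:ℕ):ℤ) = (-1:ℤ))]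
  rw [binom_of_neg (show (-1:ℤ) < 0 by norm_num), binom_natCast, ch_one_right]
  rw [binom_congr (a := (t:ℤ)) rfl (by push_cast; ring : K + ((0:ℕ):ℤ) = K)]
  ring

lemma AB_two (K : ℤ) (t : ℕ) : Asum 2 K t = Bsum 2 K t := by
  rw [Asum_two, Bsum_two]
  have hx := lemX 1 t K
  rw [ch_one_right, ch_one_right] at hx
  push_cast at hx ⊢
  linarith [hx]

/-- recurrence for Asum -/
lemma Asum_rec (M : ℕ) (K : ℤ) (t : ℕ) :
    Asum (M+3) K t = Asum (M+2) K t - Asum (M+1) (K+1) (t+1)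
      + (-1:ℤ)^(M+2) * ch (K+M+2) (M+2) * binom ((t:ℤ)+M+2) (K+M+2) := by
  have e1 : Asum (M+3) K t = binom t K
      + ((∑ i ∈ range (M+2), (-1:ℤ)^(i+1) * ch (K+M+1) i * binom ((t:ℤ)+1+i) ((K+1)+i))
      + (∑ i ∈ range (M+2), (-1:ℤ)^(i+1) * ch (K+M+1) (i+1) * binom ((t:ℤ)+1+i) ((K+1)+i))) := by
    rw [Asum, Finset.sum_range_succ']
    rw [show (-1:ℤ)^0 * ch (K + ((M+3:ℕ):ℤ) - 1) 0 * binom ((t:ℤ) + ((0:ℕ):ℤ)) (K + ((0:ℕ):ℤ))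
        = binom t K by rw [ch_zero_right]; rw [binom_congr (a := (t:ℤ) + ((0:ℕ):ℤ))
          (by push_cast; ring : (t:ℤ) + ((0:ℕ):ℤ) = (t:ℤ)) (by push_cast; ring : K + ((0:ℕ):ℤ) = K)]; ring]
    rw [← Finset.sum_add_distrib, add_comm]
    congr 1
    refine Finset.sum_congr rfl ?_
    intro i _
    rw [ch_congr (by push_cast; ring : K + ((M+3:ℕ):ℤ) - 1 = (K+M+1) + 1) (rfl : i+1 = i+1),
      ch_pascal]
    rw [binom_congr (by push_cast; ring : (t:ℤ) + ((i+1:ℕ):ℤ) = (t:ℤ)+1+i)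
      (by push_cast; ring : K + ((i+1:ℕ):ℤ) = (K+1)+i)]
    ring
  have e2 : ∑ i ∈ range (M+2), (-1:ℤ)^(i+1) * ch (K+M+1) i * binom ((t:ℤ)+1+i) ((K+1)+i)
      = -(Asum (M+1) (K+1) (t+1)) - (-1:ℤ)^(M+1) * ch (K+M+1) (M+1) * binom ((t:ℤ)+M+2) (K+M+2) := by
    have h : Asum (M+1) (K+1) (t+1)
        = ∑ i ∈ range (M+1), (-1:ℤ)^i * ch (K+M+1) i * binom ((t:ℤ)+1+i) ((K+1)+i) := by
      rw [Asum]
      refine Finset.sum_congr rfl ?_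
      intro i _
      rw [ch_congr (by push_cast; ring : (K+1) + ((M+1:ℕ):ℤ) - 1 = K+M+1) (rfl : i = i)]
      rw [binom_congr (by push_cast; ring : ((t+1:ℕ):ℤ) + (i:ℤ) = (t:ℤ)+1+i)
        (rfl : (K+1) + (i:ℤ) = (K+1)+i)]
    rw [Finset.sum_range_succ, h]
    rw [binom_congr (by push_cast; ring : (t:ℤ)+1+((M+1:ℕ):ℤ) = (t:ℤ)+M+2)
      (by push_cast; ring : (K+1)+((M+1:ℕ):ℤ) = K+M+2)]
    rw [← Finset.sum_neg_distrib]
    rw [Finset.sum_congr rfl (fun i _ => by ring :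
      ∀ i ∈ range (M+1), (-1:ℤ)^(i+1) * ch (K+M+1) i * binom ((t:ℤ)+1+i) ((K+1)+i)
        = -((-1:ℤ)^i * ch (K+M+1) i * binom ((t:ℤ)+1+i) ((K+1)+i)))]
    ring
  have e3 : ∑ i ∈ range (M+2), (-1:ℤ)^(i+1) * ch (K+M+1) (i+1) * binom ((t:ℤ)+1+i) ((K+1)+i)
      = Asum (M+2) K t - binom t K
        + (-1:ℤ)^(M+2) * ch (K+M+1) (M+2) * binom ((t:ℤ)+M+2) (K+M+2) := by
    have h4 : Asum (M+2) K t = binom t K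
        + ∑ i ∈ range (M+1), (-1:ℤ)^(i+1) * ch (K+M+1) (i+1) * binom ((t:ℤ)+1+i) ((K+1)+i) := by
      rw [Asum, Finset.sum_range_succ']
      rw [show (-1:ℤ)^0 * ch (K + ((M+2:ℕ):ℤ) - 1) 0 * binom ((t:ℤ) + ((0:ℕ):ℤ)) (K + ((0:ℕ):ℤ))
          = binom t K by rw [ch_zero_right]; rw [binom_congr (a := (t:ℤ) + ((0:ℕ):ℤ))
            (by push_cast; ring : (t:ℤ) + ((0:ℕ):ℤ) = (t:ℤ)) (by push_cast; ring : K + ((0:ℕ):ℤ) = K)]; ring]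
      rw [add_comm]
      congr 1
      refine Finset.sum_congr rfl ?_
      intro i _
      rw [ch_congr (by push_cast; ring : K + ((M+2:ℕ):ℤ) - 1 = K+M+1) (rfl : i+1 = i+1)]
      rw [binom_congr (by push_cast; ring : (t:ℤ) + ((i+1:ℕ):ℤ) = (t:ℤ)+1+i)
        (by push_cast; ring : K + ((i+1:ℕ):ℤ) = (K+1)+i)]
    rw [Finset.sum_range_succ, h4]
    rw [binom_congr (by push_cast; ring : (t:ℤ)+1+((M+1:ℕ):ℤ) = (t:ℤ)+M+2)
      (by push_cast; ring : (K+1)+((M+1:ℕ):ℤ) = K+M+2)]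
    rw [show M+1+1 = M+2 from rfl]
    ring
  rw [e1, e2, e3]
  rw [show ch (K+M+2) (M+2) = ch (K+M+1) (M+1) + ch (K+M+1) (M+2) by
    rw [← ch_pascal (K+M+1) (M+1)]; exact ch_congr (by ring) rfl]
  ring

/-- recurrence for Bsum -/
lemma Bsum_rec (M : ℕ) (K : ℤ) (t : ℕ) :
    Bsum (M+3) K t = Bsum (M+2) K t - Bsum (M+1) (K+1) (t+1)
      + (-1:ℤ)^(M+2) * ch (K+M+2) (M+2) * binom ((t:ℤ)+M+2) (K+M+2) := by
  have pasc : ∀ b : ℤ, binom (-(t:ℤ)) b = binom (-(t:ℤ)-1) (b-1) + binom (-(t:ℤ)-1) b := by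
    intro b
    have hp := binom_pascal (-(t:ℤ)-1) b
    rw [show -(t:ℤ)-1+1 = -(t:ℤ) by ring] at hp
    exact hp
  set X := ∑ j ∈ range (M+3), (-1:ℤ)^j * binom (-(t:ℤ)-1) ((M:ℤ)+2-2*j) * binom t (K + j) with hX
  set Y := ∑ j ∈ range (M+3), (-1:ℤ)^j * binom (-(t:ℤ)-1) ((M:ℤ)+1-2*j) * binom t (K + j) with hY
  set Z := ∑ j ∈ range (M+3), (-1:ℤ)^j * binom (-(t:ℤ)-1) ((M:ℤ)-2*j) * binom t (K + j) with hZ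
  have c1 : Bsum (M+3) K t = X + Y := by
    rw [Bsum, hX, hY, ← Finset.sum_add_distrib]
    refine Finset.sum_congr rfl ?_
    intro j _
    rw [binom_congr (rfl : -(t:ℤ) = -(t:ℤ))
      (by push_cast; ring : ((M+3:ℕ):ℤ) - 1 - 2*(j:ℤ) = (M:ℤ)+2-2*j)]
    rw [pasc ((M:ℤ)+2-2*j)]
    rw [binom_congr (rfl : -(t:ℤ)-1 = -(t:ℤ)-1) (by ring : (M:ℤ)+2-2*(j:ℤ)-1 = (M:ℤ)+1-2*j)]
    ring
  have c2 : Bsum (M+2) K t = Y + Z := by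
    rw [Bsum, hY, hZ, ← Finset.sum_add_distrib]
    conv_rhs => rw [Finset.sum_range_succ]
    rw [show binom (-(t:ℤ)-1) ((M:ℤ)+1-2*((M+2:ℕ):ℤ)) = 0 from
      binom_of_neg (by push_cast; omega) _]
    rw [show binom (-(t:ℤ)-1) ((M:ℤ)-2*((M+2:ℕ):ℤ)) = 0 from
      binom_of_neg (by push_cast; omega) _]
    rw [show ((-1:ℤ)^(M+2) * 0 * binom t (K + ((M+2:ℕ):ℤ)) + (-1:ℤ)^(M+2) * 0 * binom t (K + ((M+2:ℕ):ℤ))) = 0 by ring]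
    rw [add_zero]
    refine Finset.sum_congr rfl ?_
    intro j _
    rw [binom_congr (rfl : -(t:ℤ) = -(t:ℤ))
      (by push_cast; ring : ((M+2:ℕ):ℤ) - 1 - 2*(j:ℤ) = (M:ℤ)+1-2*j)]
    rw [pasc ((M:ℤ)+1-2*j)]
    rw [binom_congr (rfl : -(t:ℤ)-1 = -(t:ℤ)-1) (by ring : (M:ℤ)+1-2*(j:ℤ)-1 = (M:ℤ)-2*j)]
    ring
  have c3 : Bsum (M+1) (K+1) (t+1) = Z + (binom (-(t:ℤ)-1) ((M:ℤ)+2) * binom t K - X) := by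
    have hsplit : Bsum (M+1) (K+1) (t+1)
        = (∑ j ∈ range (M+1), (-1:ℤ)^j * binom (-(t:ℤ)-1) ((M:ℤ)-2*j) * binom t (K + j))
        + (∑ j ∈ range (M+1), (-1:ℤ)^j * binom (-(t:ℤ)-1) ((M:ℤ)-2*j) * binom t (K + 1 + j)) := by
      rw [Bsum, ← Finset.sum_add_distrib]
      refine Finset.sum_congr rfl ?_
      intro j _
      rw [binom_congr (by push_cast; ring : -((t+1:ℕ):ℤ) = -(t:ℤ)-1)
        (by push_cast; ring : ((M+1:ℕ):ℤ) - 1 - 2*(j:ℤ) = (M:ℤ)-2*j)]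
      have hp := binom_pascal (t:ℤ) (K + 1 + j)
      rw [show K+1+(j:ℤ)-1 = K+j by ring] at hp
      rw [binom_congr (by push_cast; ring : ((t+1:ℕ):ℤ) = (t:ℤ)+1)
        (by ring : K + 1 + (j:ℤ) = K + 1 + j), hp]
      ring
    have hZ' : Z = ∑ j ∈ range (M+1), (-1:ℤ)^j * binom (-(t:ℤ)-1) ((M:ℤ)-2*j) * binom t (K + j) := by
      rw [hZ, Finset.sum_range_succ, Finset.sum_range_succ]
      rw [show binom (-(t:ℤ)-1) ((M:ℤ)-2*((M+1:ℕ):ℤ)) = 0 from binom_of_neg (by push_cast; omega) _]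
      rw [show binom (-(t:ℤ)-1) ((M:ℤ)-2*((M+2:ℕ):ℤ)) = 0 from binom_of_neg (by push_cast; omega) _]
      ring
    have hX' : X = binom (-(t:ℤ)-1) ((M:ℤ)+2) * binom t K
        - ∑ j ∈ range (M+1), (-1:ℤ)^j * binom (-(t:ℤ)-1) ((M:ℤ)-2*j) * binom t (K + 1 + j) := by
      rw [hX, Finset.sum_range_succ, Finset.sum_range_succ']
      rw [show binom (-(t:ℤ)-1) ((M:ℤ)+2-2*((M+2:ℕ):ℤ)) = 0 from binom_of_neg (by push_cast; omega) _]
      rw [show (-1:ℤ)^0 * binom (-(t:ℤ)-1) ((M:ℤ)+2-2*((0:ℕ):ℤ)) * binom t (K + ((0:ℕ):ℤ))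
          = binom (-(t:ℤ)-1) ((M:ℤ)+2) * binom t K by
        rw [binom_congr (rfl : -(t:ℤ)-1 = -(t:ℤ)-1) (by push_cast; ring : (M:ℤ)+2-2*((0:ℕ):ℤ) = (M:ℤ)+2),
          binom_congr (rfl : (t:ℤ) = (t:ℤ)) (by push_cast; ring : K + ((0:ℕ):ℤ) = K)]
        ring]
      rw [Finset.sum_congr rfl (fun i _ => by
        rw [binom_congr (rfl : -(t:ℤ)-1 = -(t:ℤ)-1)
          (by push_cast; ring : (M:ℤ)+2-2*((i+1:ℕ):ℤ) = (M:ℤ)-2*i),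
          binom_congr (rfl : (t:ℤ) = (t:ℤ)) (by push_cast; ring : K + ((i+1:ℕ):ℤ) = K+1+i)]
        ring :
        ∀ i ∈ range (M+1), (-1:ℤ)^(i+1) * binom (-(t:ℤ)-1) ((M:ℤ)+2-2*((i+1:ℕ):ℤ)) * binom t (K + ((i+1:ℕ):ℤ))
          = -((-1:ℤ)^i * binom (-(t:ℤ)-1) ((M:ℤ)-2*i) * binom t (K+1+i)))]
      rw [Finset.sum_neg_distrib]
      ring
    rw [hsplit, hZ', hX']
    ring
  have hrefl : binom (-(t:ℤ)-1) ((M:ℤ)+2) = (-1:ℤ)^(M+2) * ch ((t:ℤ)+M+2) (M+2) := by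
    rw [show (M:ℤ)+2 = ((M+2:ℕ):ℤ) by push_cast; ring, binom_natCast]
    have h := ch_neg_succ t (M+2)
    rw [ch_congr (by push_cast; ring : (t:ℤ) + ((M+2:ℕ):ℤ) = (t:ℤ)+M+2) rfl] at h
    exact h
  have hXfin : binom (-(t:ℤ)-1) ((M:ℤ)+2) * binom t K
      = (-1:ℤ)^(M+2) * ch (K+M+2) (M+2) * binom ((t:ℤ)+M+2) (K+M+2) := by
    rw [hrefl]
    have hx := lemX (M+2) t K
    rw [ch_congr (by push_cast; ring : (t:ℤ) + ((M+2:ℕ):ℤ) = (t:ℤ)+M+2) rfl,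
      ch_congr (by push_cast; ring : ((M+2:ℕ):ℤ) + K = K+M+2) rfl,
      binom_congr (by push_cast; ring : (t:ℤ) + ((M+2:ℕ):ℤ) = (t:ℤ)+M+2)
        (by push_cast; ring : K + ((M+2:ℕ):ℤ) = K+M+2)] at hx
    rw [mul_assoc, hx]
    ring
  have : Bsum (M+3) K t - Bsum (M+2) K t + Bsum (M+1) (K+1) (t+1)
      = binom (-(t:ℤ)-1) ((M:ℤ)+2) * binom t K := by
    rw [c1, c2, c3]
    ring
  have goal := this
  rw [hXfin] at goal
  linarith [goal]

/-- The core identity: `Asum N K t = Bsum N K t`. -/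
theorem Asum_eq_Bsum : ∀ (N : ℕ) (K : ℤ) (t : ℕ), Asum N K t = Bsum N K t := by
  intro N
  induction N using Nat.strong_induction_on with
  | _ N ih =>
    match N with
    | 0 => intro K t; rw [Asum_zero, Bsum_zero]
    | 1 => intro K t; rw [Asum_one, Bsum_one]
    | 2 => intro K t; exact AB_two K t
    | (M+3) =>
      intro K t
      rw [Asum_rec, Bsum_rec, ih (M+2) (by omega), ih (M+1) (by omega)]
end QZero
end part2

section part3
open Finset
namespace QZero

/-- finsum over ℤ equals sum over an Icc containing the support -/
lemma finsum_eq_sum_Icc (f : ℤ → ℤ) (L U : ℤ) (h : ∀ i, i ∉ Finset.Icc L U → f i = 0) :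
    ∑ᶠ i : ℤ, f i = ∑ i ∈ Finset.Icc L U, f i := by
  apply finsum_eq_sum_of_support_subset
  intro i hi
  simp only [Function.mem_support] at hi
  by_contra hc
  exact hi (h i (by simpa using hc))

/-- finsum over Iic equals sum over Icc when terms vanish below L -/
lemma finsum_Iic_eq_sum_Icc (f : ℤ → ℤ) (L w : ℤ) (h : ∀ i, i < L → f i = 0) :
    ∑ᶠ i ∈ Set.Iic w, f i = ∑ i ∈ Finset.Icc L w, f i := by
  rw [finsum_mem_eq_sum_of_inter_support_eq f
    (t := Finset.Icc L w)]
  ext i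
  simp only [Set.mem_inter_iff, Set.mem_Iic, Function.mem_support, Finset.coe_Icc,
    Set.mem_Icc]
  constructor
  · rintro ⟨h1, h2⟩
    refine ⟨⟨?_, h1⟩, h2⟩
    by_contra hc
    exact h2 (h i (by omega))
  · rintro ⟨⟨_, h1⟩, h2⟩
    exact ⟨h1, h2⟩

/-- descending reindex: `∑_{i∈Icc L w} f i = ∑_{j<(w+1-L).toNat} f (w-j)` -/
lemma sum_Icc_eq_range_desc (f : ℤ → ℤ) (L w : ℤ) :
    ∑ i ∈ Finset.Icc L w, f i = ∑ j ∈ range (w + 1 - L).toNat, f (w - j) := by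
  refine Finset.sum_nbij' (fun a => (w - a).toNat) (fun b => w - (b : ℤ)) ?_ ?_ ?_ ?_ ?_
  · intro a ha
    simp only [Finset.mem_Icc] at ha
    simp only [Finset.mem_range]
    omega
  · intro b hb
    simp only [Finset.mem_range] at hb
    simp only [Finset.mem_Icc]
    omega
  · intro a ha
    simp only [Finset.mem_Icc] at ha
    omega
  · intro b hb
    simp only [Finset.mem_range] at hb
    omega
  · intro a ha
    simp only [Finset.mem_Icc] at ha
    congr 1
    omega

/-- ascending reindex with nonneg support -/
lemma sum_Icc_eq_range_asc (f : ℤ → ℤ) (L U : ℤ) (hf : ∀ i : ℤ, i < 0 → f i = 0) :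
    ∑ i ∈ Finset.Icc L U, f i = ∑ j ∈ Finset.Ico L.toNat (U + 1).toNat, f (j : ℤ) := by
  have h1 : ∑ i ∈ Finset.Icc L U, f i = ∑ i ∈ Finset.Icc (max L 0) U, f i := by
    refine (Finset.sum_subset ?_ ?_).symm
    · intro x hx
      simp only [Finset.mem_Icc] at *
      omega
    · intro x hx1 hx2
      simp only [Finset.mem_Icc] at hx1 hx2
      exact hf x (by omega)
  rw [h1]
  refine Finset.sum_nbij' (fun a => a.toNat) (fun b => (b : ℤ)) ?_ ?_ ?_ ?_ ?_
  · intro a ha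
    simp only [Finset.mem_Icc] at ha
    simp only [Finset.mem_Ico]
    omega
  · intro b hb
    simp only [Finset.mem_Ico] at hb
    simp only [Finset.mem_Icc]
    omega
  · intro a ha
    simp only [Finset.mem_Icc] at ha
    omega
  · intro b hb
    simp only [Finset.mem_Ico] at hb
    omega
  · intro a ha
    simp only [Finset.mem_Icc] at ha
    congr 1
    omega

/-- reflection with negative upper index, binom form -/
lemma binom_reflect (t : ℕ) (b : ℤ) :
    binom ((t:ℤ) + b - 1) b = (b.negOnePow : ℤ) * binom (-(t:ℤ)) b := by
  rcases lt_or_ge b 0 with hb | hb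
  · rw [binom_of_neg hb, binom_of_neg hb]; ring
  · set n := b.toNat with hn
    have hbn : b = (n : ℤ) := by omega
    rw [hbn, binom_natCast, binom_natCast, Int.coe_negOnePow_natCast,
      ch_shift_reflect t n]

/-- inner evaluation: `∑_{r≤wn} (-1)^r C(c,r) C(r,j) = (-1)^wn C(c,j) C(c-1-j, wn-j)` -/
lemma inner_eval (c j wn : ℕ) :
    ∑ r ∈ range (wn+1), (-1:ℤ)^r * ch (c:ℤ) r * (r.choose j : ℤ)
      = (-1:ℤ)^wn * ch (c:ℤ) j * binom ((c:ℤ) - 1 - j) ((wn:ℤ) - j) := by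
  have step : ∀ r : ℕ, (-1:ℤ)^r * ch (c:ℤ) r * (r.choose j : ℤ)
      = (-1:ℤ)^r * (ch (c:ℤ) j * binom ((c:ℤ) - j) ((r:ℤ) - j)) := by
    intro r
    rw [← trinomial (c:ℤ) r j]
    ring
  rw [Finset.sum_congr rfl (fun r _ => step r)]
  rcases le_or_gt j wn with hj | hj
  · -- split range at j
    rw [show wn + 1 = j + (wn + 1 - j) by omega, Finset.sum_range_add]
    have hfirst : ∑ r ∈ range j, (-1:ℤ)^r * (ch (c:ℤ) j * binom ((c:ℤ) - j) ((r:ℤ) - j)) = 0 := by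
      refine Finset.sum_eq_zero ?_
      intro r hr
      rw [Finset.mem_range] at hr
      rw [binom_of_neg (by omega)]
      ring
    rw [hfirst, zero_add]
    have hterm : ∀ s : ℕ, (-1:ℤ)^(j+s) * (ch (c:ℤ) j * binom ((c:ℤ) - j) (((j+s:ℕ):ℤ) - j))
        = ch (c:ℤ) j * (-1:ℤ)^j * ((-1:ℤ)^s * ch ((c:ℤ) - j) s) := by
      intro s
      rw [binom_congr (rfl : (c:ℤ) - j = (c:ℤ) - j) (by push_cast; ring : ((j+s:ℕ):ℤ) - j = ((s:ℕ):ℤ)),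
        binom_natCast, pow_add]
      ring
    rw [Finset.sum_congr rfl (fun s _ => hterm s), ← Finset.mul_sum]
    have hw : wn + 1 - j = (wn - j) + 1 := by omega
    rw [hw, alt_partial_sum ((c:ℤ) - j) (wn - j)]
    rw [show binom ((c:ℤ) - 1 - j) ((wn:ℤ) - j) = ch ((c:ℤ) - j - 1) (wn - j) by
      rw [show (wn:ℤ) - j = ((wn - j : ℕ):ℤ) by omega, binom_natCast]
      exact ch_congr (by ring) rfl]
    rw [show (-1:ℤ)^wn = (-1:ℤ)^j * (-1:ℤ)^(wn-j) by rw [← pow_add]; congr 1; omega]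
    ring
  · -- j > wn : all terms vanish
    rw [binom_of_neg (by omega : (wn:ℤ) - j < 0)]
    rw [Finset.sum_eq_zero ?_]
    · ring
    intro r hr
    rw [Finset.mem_range] at hr
    rw [binom_of_neg (by omega : (r:ℤ) - j < 0)]
    ring

/-- evaluation of the S1-type sum -/
lemma S1eval (c t : ℕ) (K w : ℤ) :
    ∑ j ∈ range (c+1), ch (c:ℤ) j * binom ((c:ℤ) - 1 - j) (w - j) * binom t (K + j)
      = (w.negOnePow : ℤ) * ∑ r ∈ range (w+1).toNat, (-1:ℤ)^r * ch (c:ℤ) r * binom ((t:ℤ)+r) (K+r) := by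
  rcases lt_or_ge w 0 with hw | hw
  · rw [show (w+1).toNat = 0 by omega]
    rw [Finset.sum_eq_zero (fun j _ => by rw [binom_of_neg (by omega : w - (j:ℤ) < 0)]; ring)]
    simp
  · set wn := w.toNat with hwn
    have hw' : w = (wn : ℤ) := by omega
    have h1 : (w+1).toNat = wn + 1 := by omega
    rw [h1, hw', Int.coe_negOnePow_natCast]
    have hvan : ∀ r ∈ range (wn+1),
        (-1:ℤ)^r * ch (c:ℤ) r * binom ((t:ℤ)+r) (K+r)
        = ∑ j ∈ range (wn+1), (-1:ℤ)^r * ch (c:ℤ) r * ((r.choose j : ℤ) * binom t (K+j)) := by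
      intro r hr
      rw [Finset.mem_range] at hr
      rw [vandermonde_split t r K, Finset.mul_sum]
      refine Finset.sum_subset ?_ ?_
      · intro x hx
        rw [Finset.mem_range] at *
        omega
      · intro x hx1 hx2
        rw [Finset.mem_range] at hx1 hx2
        rw [Nat.choose_eq_zero_of_lt (by omega), Nat.cast_zero, zero_mul, mul_zero]
    rw [Finset.sum_congr rfl hvan, Finset.sum_comm]
    have hj : ∀ j ∈ range (wn+1),
        ∑ r ∈ range (wn+1), (-1:ℤ)^r * ch (c:ℤ) r * ((r.choose j : ℤ) * binom t (K + j))
        = (ch (c:ℤ) j * binom ((c:ℤ)-1-j) ((wn:ℤ)-j) * binom t (K+j)) * (-1:ℤ)^wn := by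
      intro j _
      have hstep : ∀ r:ℕ, (-1:ℤ)^r * ch (c:ℤ) r * ((r.choose j:ℤ) * binom t (K+j))
          = ((-1:ℤ)^r * ch (c:ℤ) r * (r.choose j:ℤ)) * binom t (K+j) := fun r => by ring
      rw [Finset.sum_congr rfl (fun r _ => hstep r), ← Finset.sum_mul, inner_eval c j wn]
      ring
    rw [Finset.sum_congr rfl hj, ← Finset.sum_mul]
    have hsq : ∀ x:ℤ, (-1:ℤ)^wn * (x * (-1:ℤ)^wn) = x := by
      intro x
      rw [show (-1:ℤ)^wn * (x*(-1:ℤ)^wn) = x * ((-1:ℤ)^wn)^2 by ring, ← pow_mul,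
        mul_comm wn 2, pow_mul]
      norm_num
    rw [hsq]
    rcases le_or_gt c wn with hc | hc
    · refine Finset.sum_subset ?_ ?_
      · intro x hx
        rw [Finset.mem_range] at *
        omega
      · intro x hx1 hx2
        rw [Finset.mem_range] at hx1 hx2
        rw [ch_eq_zero_of_lt (by omega : c < x)]
        ring
    · refine (Finset.sum_subset ?_ ?_).symm
      · intro x hx
        rw [Finset.mem_range] at *
        omega
      · intro x hx1 hx2
        rw [Finset.mem_range] at hx1 hx2
        rw [binom_of_neg (by omega : (wn:ℤ) - (x:ℤ) < 0)]
        ring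

/-- subset-of-subset chain: `C(n,b) C(b,k) = C(n,k) C(n-k, b-k)` -/
lemma lemY (n k : ℕ) (b : ℤ) :
    binom (n:ℤ) b * binom b (k:ℤ) = ch (n:ℤ) k * binom ((n:ℤ) - k) (b - k) := by
  rcases lt_or_ge b 0 with hb | hb
  · rw [binom_of_neg hb, binom_of_neg (by omega : b - (k:ℤ) < 0)]
    ring
  · set b' := b.toNat with hb'
    have hbb : b = (b' : ℤ) := by omega
    rcases lt_or_ge b' k with hk | hk
    · rw [hbb, binom_natCast ((n:ℕ):ℤ) b', binom_natCast ((b':ℕ):ℤ) k,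
        ch_eq_zero_of_lt hk, binom_of_neg (by omega : (b':ℤ) - (k:ℤ) < 0)]
      ring
    · have h2 := Ring.choose_smul_choose ((n:ℕ):ℤ) (n := b') (k := k) hk
      rw [hbb, binom_natCast, binom_natCast,
        show binom ((n:ℤ) - k) ((b':ℤ) - k) = ch ((n:ℤ) - k) (b' - k) by
          rw [show (b':ℤ) - (k:ℤ) = ((b' - k : ℕ):ℤ) by omega, binom_natCast],
        show ch ((b':ℕ):ℤ) k = (b'.choose k : ℤ) from ch_natCast b' k]
      rw [mul_comm]
      rw [show ((b'.choose k : ℕ):ℤ) * ch ((n:ℕ):ℤ) b' = (b'.choose k) • ch ((n:ℕ):ℤ) b' by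
        rw [nsmul_eq_mul]]
      rw [h2]

/-- the inductive step for fact3 -/
lemma fact3_step (t w : ℕ) (a : ℤ) :
    ch ((t:ℤ)+w) (w+1) * binom t (a - w - 1)
      = ch (a-1) (w+1) * binom ((t:ℤ)+w+1) a + ch (a-1) w * binom ((t:ℤ)+w) a := by
  have hp1 : binom ((t:ℤ)+w+1) a = binom ((t:ℤ)+w) (a-1) + binom ((t:ℤ)+w) a :=
    binom_pascal ((t:ℤ)+w) a
  have hpc : ch (a-1) w + ch (a-1) (w+1) = ch a (w+1) := by
    rw [← ch_pascal (a-1) w]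
    exact ch_congr (by ring) rfl
  have hY1 : ch (a-1) (w+1) * binom ((t:ℤ)+w) (a-1)
      = ch ((t:ℤ)+w) (w+1) * binom ((t:ℤ)-1) (a - w - 2) := by
    have h := lemY (t+w) (w+1) (a-1)
    rw [show (((t+w:ℕ)):ℤ) = (t:ℤ)+w by push_cast; ring] at h
    rw [show binom (a-1) (((w+1:ℕ)):ℤ) = ch (a-1) (w+1) from binom_natCast _ _] at h
    rw [show ((t:ℤ)+w) - ((w+1:ℕ):ℤ) = (t:ℤ)-1 by push_cast; ring] at h
    rw [show (a-1) - ((w+1:ℕ):ℤ) = a - w - 2 by push_cast; ring] at h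
    rw [mul_comm] at h
    exact h
  have hY2 : ch a (w+1) * binom ((t:ℤ)+w) a
      = ch ((t:ℤ)+w) (w+1) * binom ((t:ℤ)-1) (a - w - 1) := by
    have h := lemY (t+w) (w+1) a
    rw [show (((t+w:ℕ)):ℤ) = (t:ℤ)+w by push_cast; ring] at h
    rw [show binom a (((w+1:ℕ)):ℤ) = ch a (w+1) from binom_natCast _ _] at h
    rw [show ((t:ℤ)+w) - ((w+1:ℕ):ℤ) = (t:ℤ)-1 by push_cast; ring] at h
    rw [show a - ((w+1:ℕ):ℤ) = a - w - 1 by push_cast; ring] at h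
    rw [mul_comm] at h
    exact h
  have hp2 : binom ((t:ℤ)) (a-w-1) = binom ((t:ℤ)-1) (a-w-2) + binom ((t:ℤ)-1) (a-w-1) := by
    have h := binom_pascal ((t:ℤ)-1) (a-w-1)
    rw [show (t:ℤ)-1+1 = (t:ℤ) by ring, show a-w-1-1 = a-w-2 by ring] at h
    exact h
  calc ch ((t:ℤ)+w) (w+1) * binom t (a - w - 1)
      = ch ((t:ℤ)+w) (w+1) * (binom ((t:ℤ)-1) (a-w-2) + binom ((t:ℤ)-1) (a-w-1)) := by rw [← hp2]
    _ = ch ((t:ℤ)+w) (w+1) * binom ((t:ℤ)-1) (a - w - 2)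
        + ch ((t:ℤ)+w) (w+1) * binom ((t:ℤ)-1) (a - w - 1) := by ring
    _ = ch (a-1) (w+1) * binom ((t:ℤ)+w) (a-1) + ch a (w+1) * binom ((t:ℤ)+w) a := by
        rw [hY1, hY2]
    _ = ch (a-1) (w+1) * binom ((t:ℤ)+w+1) a + ch (a-1) w * binom ((t:ℤ)+w) a := by
        rw [hp1, ← hpc]
        ring

/-- partial Vandermonde with negative upper argument (Fact 3) -/
lemma fact3 (t : ℕ) (a : ℤ) (w : ℕ) :
    ∑ j ∈ range (w+1), binom (-(t:ℤ)) ((j:ℕ):ℤ) * binom t (a - j)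
      = (-1:ℤ)^w * ch (a-1) w * binom ((t:ℤ)+w) a := by
  induction w with
  | zero =>
      rw [Finset.sum_range_one]
      push_cast
      simp [binom_zero_right, ch_zero_right]
  | succ w ih =>
      rw [Finset.sum_range_succ, ih]
      have hrefl : binom (-(t:ℤ)) (((w+1:ℕ)):ℤ) = (-1:ℤ)^(w+1) * ch ((t:ℤ)+w) (w+1) := by
        rw [binom_natCast]
        have h := ch_shift_reflect t (w+1)
        rw [ch_congr (show (t:ℤ) + ((w+1:ℕ):ℤ) - 1 = (t:ℤ)+w by push_cast; ring) rfl] at h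
        rw [h, ← mul_assoc, ← pow_add]
        rw [show ((-1:ℤ))^((w+1)+(w+1)) = 1 by rw [← two_mul, pow_mul]; norm_num, one_mul]
      rw [hrefl]
      rw [binom_congr (rfl : (t:ℤ) = (t:ℤ)) (show a - ((w+1:ℕ):ℤ) = a - w - 1 by push_cast; ring)]
      rw [binom_congr (show (t:ℤ) + ((w+1:ℕ):ℤ) = (t:ℤ)+w+1 by push_cast; ring) (rfl : a = a)]
      rw [mul_assoc ((-1:ℤ)^(w+1)) _ _, fact3_step t w a]
      ring

end QZero
end part3

section part4
open Finset
namespace QZero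

lemma nOP_mul (a b : ℤ) : ((a.negOnePow : ℤ)) * ((b.negOnePow : ℤ)) = (((a+b).negOnePow : ℤ)) := by
  rw [Int.negOnePow_add]
  push_cast
  ring

lemma nOP_shift (x y : ℤ) : ((x + 2*y).negOnePow : ℤ) = (x.negOnePow : ℤ) := by
  rw [Int.negOnePow_add, Int.negOnePow_two_mul]
  push_cast
  ring

lemma nOP_natCast (n : ℕ) : (((n:ℤ).negOnePow : ℤ)) = (-1:ℤ)^n := Int.coe_negOnePow_natCast n

/-- shift reindex for Icc sums -/
lemma sum_Icc_shift (f : ℤ → ℤ) (a b s : ℤ) :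
    ∑ i ∈ Finset.Icc a b, f (i + s) = ∑ i ∈ Finset.Icc (a+s) (b+s), f i := by
  refine Finset.sum_nbij' (fun i => i + s) (fun i => i - s) ?_ ?_ ?_ ?_ ?_
  · intro x hx; simp only [Finset.mem_Icc] at *; omega
  · intro x hx; simp only [Finset.mem_Icc] at *; omega
  · intro x hx; omega
  · intro x hx; omega
  · intro x hx; dsimp only

/-- Term 1 evaluation -/
lemma term1_eval (w t I α : ℤ) (ht : 0 ≤ t) (hI : 1 ≤ I) :
    ∑ᶠ i : ℤ, binom (I - 1) (w - i) * binom (i + I - w - 2) i * binom t (I - i - α)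
      = (w.negOnePow : ℤ) * ∑ r ∈ range (w+1).toNat,
          (-1:ℤ)^r * ch (I-1) r * binom (t + r) ((I - w - α) + r) := by
  set tn := t.toNat with htn
  set cn := (I-1).toNat with hcn
  have ht' : t = (tn : ℤ) := by omega
  have hc' : I - 1 = (cn : ℤ) := by omega
  have h1 : ∑ᶠ i : ℤ, binom (I - 1) (w - i) * binom (i + I - w - 2) i * binom t (I - i - α)
      = ∑ i ∈ Finset.Icc (w - I + 1) w, binom (I - 1) (w - i) * binom (i + I - w - 2) i * binom t (I - i - α) := by
    apply finsum_eq_sum_Icc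
    intro i hi
    simp only [Finset.mem_Icc, not_and_or, not_le] at hi
    rcases hi with hi | hi
    · rw [binom_eq_zero_of_lt (by omega : (0:ℤ) ≤ I - 1) (by omega : I - 1 < w - i)]
      ring
    · rw [binom_of_neg (by omega : w - i < 0)]
      ring
  rw [h1, sum_Icc_eq_range_desc]
  have h2 : (w + 1 - (w - I + 1)).toNat = cn + 1 := by omega
  rw [h2]
  have h3 : ∀ j ∈ range (cn+1),
      binom (I - 1) (w - (w - j)) * binom ((w - j) + I - w - 2) (w - j) * binom t (I - (w - j) - α)
        = ch (cn:ℤ) j * binom ((cn:ℤ) - 1 - j) (w - j) * binom tn ((I - w - α) + j) := by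
    intro j _
    rw [binom_congr (hc' : I - 1 = (cn:ℤ)) (by ring : w - (w - (j:ℤ)) = ((j:ℕ):ℤ)), binom_natCast]
    rw [binom_congr (by omega : (w - j) + I - w - 2 = (cn:ℤ) - 1 - j) (rfl : w - (j:ℤ) = w - j)]
    rw [binom_congr (ht' : t = (tn:ℤ)) (by ring : I - (w - (j:ℤ)) - α = (I - w - α) + j)]
  rw [Finset.sum_congr rfl h3, S1eval cn tn (I - w - α) w]
  congr 1
  refine Finset.sum_congr rfl ?_
  intro r _
  rw [ch_congr hc'.symm rfl, binom_congr (by omega : (tn:ℤ) + r = t + r) rfl]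

/-- Term 2 evaluation -/
lemma term2_eval (w t I α : ℤ) (ht : 0 ≤ t) (hα : 0 ≤ α) (hwα : 0 ≤ w + α) :
    ∑ᶠ i ∈ Set.Iic w, ((i + w + 1 + α).negOnePow : ℤ)
        * binom (2*i - w - 2 + t + α) (2*i - w - 1 + α) * binom t (I - i - α)
      = (w.negOnePow : ℤ) * Bsum (w+α).toNat (I - w - α) t.toNat := by
  set tn := t.toNat with htn
  set mn := (w+α).toNat with hmn
  have ht' : t = (tn : ℤ) := by omega
  have hm' : w + α = (mn : ℤ) := by omega
  have h1 : ∑ᶠ i ∈ Set.Iic w, ((i + w + 1 + α).negOnePow : ℤ)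
        * binom (2*i - w - 2 + t + α) (2*i - w - 1 + α) * binom t (I - i - α)
      = ∑ i ∈ Finset.Icc (I - α - t) w, ((i + w + 1 + α).negOnePow : ℤ)
        * binom (2*i - w - 2 + t + α) (2*i - w - 1 + α) * binom t (I - i - α) := by
    apply finsum_Iic_eq_sum_Icc
    intro i hi
    rw [binom_eq_zero_of_lt ht (by omega : t < I - i - α)]
    ring
  rw [h1, sum_Icc_eq_range_desc]
  have h3 : ∀ j ∈ range (w + 1 - (I - α - t)).toNat,
      (((w - j) + w + 1 + α).negOnePow : ℤ)
        * binom (2*(w-j) - w - 2 + t + α) (2*(w-j) - w - 1 + α) * binom t (I - (w-j) - α)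
      = (w.negOnePow : ℤ) * ((-1:ℤ)^j * binom (-(tn:ℤ)) ((w + α) - 1 - 2*j) * binom tn ((I - w - α) + j)) := by
    intro j _
    have hb := binom_reflect tn ((w + α) - 1 - 2*(j:ℤ))
    rw [binom_congr (by omega : 2*(w-(j:ℤ)) - w - 2 + t + α = (tn:ℤ) + ((w + α) - 1 - 2*(j:ℤ)) - 1)
      (by ring : 2*(w-(j:ℤ)) - w - 1 + α = (w + α) - 1 - 2*(j:ℤ)), hb]
    rw [binom_congr (ht' : t = (tn:ℤ)) (by ring : I - (w - (j:ℤ)) - α = (I - w - α) + j)]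
    have hsign : (((w - j) + w + 1 + α).negOnePow : ℤ) * ((((w + α) - 1 - 2*(j:ℤ)).negOnePow : ℤ))
        = (w.negOnePow : ℤ) * (-1:ℤ)^j := by
      rw [nOP_mul]
      rw [show ((w - (j:ℤ)) + w + 1 + α) + ((w + α) - 1 - 2*(j:ℤ)) = (w + j) + 2*(w + α - 2*j) by ring]
      rw [nOP_shift, ← nOP_mul, nOP_natCast]
    calc (((w - j) + w + 1 + α).negOnePow : ℤ)
          * ((((w + α) - 1 - 2*(j:ℤ)).negOnePow : ℤ) * binom (-(tn:ℤ)) ((w + α) - 1 - 2*(j:ℤ)))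
          * binom tn ((I - w - α) + j)
        = ((((w - j) + w + 1 + α).negOnePow : ℤ) * (((w + α) - 1 - 2*(j:ℤ)).negOnePow : ℤ))
          * binom (-(tn:ℤ)) ((w + α) - 1 - 2*(j:ℤ)) * binom tn ((I - w - α) + j) := by ring
      _ = _ := by rw [hsign]; ring
  rw [Finset.sum_congr rfl h3, ← Finset.mul_sum]
  congr 1
  -- pad both sums to a common range
  rw [Bsum]
  have hcommon : ∀ M : ℕ, (w + 1 - (I - α - t)).toNat ≤ M → mn ≤ M →
      (∑ j ∈ range (w + 1 - (I - α - t)).toNat,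
        (-1:ℤ)^j * binom (-(tn:ℤ)) ((w + α) - 1 - 2*j) * binom tn ((I - w - α) + j))
      = ∑ j ∈ range M, (-1:ℤ)^j * binom (-(tn:ℤ)) ((w + α) - 1 - 2*j) * binom tn ((I - w - α) + j) := by
    intro M h1 h2
    refine Finset.sum_subset ?_ ?_
    · intro x hx; rw [Finset.mem_range] at *; omega
    · intro x hx1 hx2
      rw [Finset.mem_range] at hx1 hx2
      rw [binom_eq_zero_of_lt (by omega : (0:ℤ) ≤ (tn:ℤ)) (by omega : (tn:ℤ) < (I - w - α) + x)]
      ring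
  have hB : ∀ M : ℕ, mn ≤ M →
      (∑ j ∈ range mn, (-1:ℤ)^j * binom (-(tn:ℤ)) ((mn:ℤ) - 1 - 2*j) * binom tn ((I - w - α) + j))
      = ∑ j ∈ range M, (-1:ℤ)^j * binom (-(tn:ℤ)) ((mn:ℤ) - 1 - 2*j) * binom tn ((I - w - α) + j) := by
    intro M h2
    refine Finset.sum_subset ?_ ?_
    · intro x hx; rw [Finset.mem_range] at *; omega
    · intro x hx1 hx2
      rw [Finset.mem_range] at hx1 hx2
      rw [binom_of_neg (by omega : (mn:ℤ) - 1 - 2*(x:ℤ) < 0)]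
      ring
  set M := max (w + 1 - (I - α - t)).toNat mn with hM
  rw [hcommon M (le_max_left _ _) (le_max_right _ _), hB M (le_max_right _ _)]
  refine Finset.sum_congr rfl ?_
  intro j _
  rw [binom_congr (rfl : -(tn:ℤ) = -(tn:ℤ)) (by omega : (w+α) - 1 - 2*(j:ℤ) = (mn:ℤ) - 1 - 2*j)]

end QZero
end part4

section part5
open Finset
namespace QZero

/-- Term 3 evaluation (case `α ≥ 1`) -/
lemma term3_eval (w t I α : ℤ) (ht : 0 ≤ t) (hα : 1 ≤ α) :
    ∑ i ∈ Finset.Icc 1 (α-1), ((i+1).negOnePow : ℤ) * binom (I-1) (w+i) * binom (t+w+i) (I-α+i)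
      = -(w.negOnePow : ℤ) * ∑ r ∈ Finset.Ico (w+1).toNat (w+α).toNat,
          (-1:ℤ)^r * ch (I-1) r * binom (t + r) ((I - w - α) + r) := by
  set F : ℤ → ℤ := fun j => ((j - w + 1).negOnePow : ℤ) * binom (I-1) j * binom (t+j) (I-α+j-w)
    with hF
  have step1 : ∑ i ∈ Finset.Icc 1 (α-1), ((i+1).negOnePow : ℤ) * binom (I-1) (w+i) * binom (t+w+i) (I-α+i)
      = ∑ i ∈ Finset.Icc 1 (α-1), F (i + w) := by
    refine Finset.sum_congr rfl ?_
    intro i _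
    rw [hF]
    dsimp only
    rw [show i + w - w + 1 = i + 1 by ring, show w + i = i + w by ring,
      show t + w + i = t + (i + w) by ring, show I - α + i = I - α + (i + w) - w by ring]
  rw [step1, sum_Icc_shift F 1 (α-1) w]
  rw [sum_Icc_eq_range_asc F (1+w) (α-1+w) (fun i hi => by
    rw [hF]; dsimp only; rw [binom_of_neg (by omega : i < 0)]; ring)]
  rw [show (1+w).toNat = (w+1).toNat by omega, show (α-1+w+1).toNat = (w+α).toNat by omega]
  rw [Finset.mul_sum]
  refine Finset.sum_congr rfl ?_
  intro j _
  rw [hF]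
  dsimp only
  have hsign : (((j:ℤ) - w + 1).negOnePow : ℤ) = -((-1:ℤ)^j * (w.negOnePow : ℤ)) := by
    rw [show ((j:ℤ) - w + 1) = ((j:ℤ) + (w + 1)) + 2*(-w) by ring, nOP_shift, ← nOP_mul,
      nOP_natCast, Int.negOnePow_succ]
    push_cast
    ring
  rw [hsign, binom_natCast (I-1) j,
    binom_congr (rfl : t + (j:ℤ) = t + j) (by ring : I - α + (j:ℤ) - w = (I - w - α) + j)]
  ring

/-- Term 3 evaluation (case `α = 0`) -/
lemma term3v_eval (w t I : ℤ) (ht : 0 ≤ t) (hw : 0 ≤ w) :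
    ∑ᶠ i ∈ Set.Iic w, ((i+w).negOnePow : ℤ) * binom (t+i-1) i * binom t (I-i)
      = (w.negOnePow : ℤ) * ((-1:ℤ)^w.toNat * ch (I-1) w.toNat * binom (t+w) I) := by
  set tn := t.toNat with htn
  set wn := w.toNat with hwn
  have ht' : t = (tn : ℤ) := by omega
  have hw' : w = (wn : ℤ) := by omega
  rw [finsum_Iic_eq_sum_Icc _ 0 w (fun i hi => by
    rw [binom_of_neg (by omega : i < 0)]; ring)]
  rw [sum_Icc_eq_range_asc _ 0 w (fun i hi => by
    rw [binom_of_neg (by omega : i < 0)]; ring)]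
  rw [show (0:ℤ).toNat = 0 from rfl, show (w+1).toNat = wn + 1 by omega, ← Finset.range_eq_Ico]
  have hterm : ∀ j ∈ range (wn+1),
      (((j:ℤ)+w).negOnePow : ℤ) * binom (t+(j:ℤ)-1) (j:ℤ) * binom t (I-(j:ℤ))
        = (w.negOnePow : ℤ) * (binom (-(tn:ℤ)) ((j:ℕ):ℤ) * binom tn (I - j)) := by
    intro j _
    have hb := binom_reflect tn ((j:ℕ):ℤ)
    rw [binom_congr (by omega : t + (j:ℤ) - 1 = (tn:ℤ) + ((j:ℕ):ℤ) - 1) (rfl : (j:ℤ) = (j:ℤ)), hb]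
    rw [binom_congr (ht' : t = (tn:ℤ)) (rfl : I - (j:ℤ) = I - j)]
    have hsign : (((j:ℤ)+w).negOnePow : ℤ) * (((j:ℕ):ℤ).negOnePow : ℤ) = (w.negOnePow : ℤ) := by
      rw [nOP_mul, show ((j:ℤ)+w) + ((j:ℕ):ℤ) = w + 2*(j:ℤ) by ring]
      rw [show (w + 2*(j:ℤ)) = w + 2*(j:ℤ) from rfl]
      exact nOP_shift w (j:ℤ)
    calc (((j:ℤ)+w).negOnePow : ℤ) * ((((j:ℕ):ℤ).negOnePow : ℤ) * binom (-(tn:ℤ)) ((j:ℕ):ℤ)) * binom tn (I - j)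
        = ((((j:ℤ)+w).negOnePow : ℤ) * (((j:ℕ):ℤ).negOnePow : ℤ)) * (binom (-(tn:ℤ)) ((j:ℕ):ℤ) * binom tn (I - j)) := by ring
      _ = _ := by rw [hsign]
  rw [Finset.sum_congr rfl hterm, ← Finset.mul_sum]
  congr 1
  have hf := fact3 tn I wn
  rw [hf]
  rw [binom_congr (by omega : (tn:ℤ) + (wn:ℤ) = t + w) (rfl : I = I)]

end QZero


open QZero Finset in
theorem Q_eq_zero (w t I α : ℤ) (hα : 0 ≤ α) (ht : 0 ≤ t) (hwα : 0 ≤ w + α) (hI : 1 ≤ I) :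
    Q w t I α = 0 := by
  rcases eq_or_ne α 0 with rfl | hα0
  · -- case α = 0
    rw [Q, if_pos rfl]
    have hw : 0 ≤ w := by omega
    set tn := t.toNat with htn
    set wn := w.toNat with hwn
    have e1 : ∑ᶠ i : ℤ, binom (I - 1) (w - i) * binom (i + I - w - 2) i * binom t (I - i)
        = ∑ᶠ i : ℤ, binom (I - 1) (w - i) * binom (i + I - w - 2) i * binom t (I - i - 0) := by
      apply finsum_congr
      intro i
      rw [binom_congr (rfl : t = t) (by ring : I - i = I - i - 0)]
    have e2 : ∑ᶠ i ∈ Set.Iic w, ((i + w + 1).negOnePow : ℤ)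
          * binom (2*i - w - 2 + t) (2*i - w - 1) * binom t (I - i)
        = ∑ᶠ i ∈ Set.Iic w, ((i + w + 1 + 0).negOnePow : ℤ)
          * binom (2*i - w - 2 + t + 0) (2*i - w - 1 + 0) * binom t (I - i - 0) := by
      apply finsum_mem_congr rfl
      intro i _
      rw [show i + w + 1 + 0 = i + w + 1 by ring,
        binom_congr (by ring : 2*i - w - 2 + t = 2*i - w - 2 + t + 0) (by ring : 2*i - w - 1 = 2*i - w - 1 + 0),
        binom_congr (rfl : t = t) (by ring : I - i = I - i - 0)]
    rw [e1, e2, term1_eval w t I 0 ht hI, term2_eval w t I 0 ht le_rfl hwα,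
      term3v_eval w t I ht hw]
    have hsplit : ∑ r ∈ range (w+1).toNat, (-1:ℤ)^r * ch (I-1) r * binom (t + r) ((I - w - 0) + r)
        = (∑ r ∈ range wn, (-1:ℤ)^r * ch (I-1) r * binom (t + r) ((I - w - 0) + r))
          + (-1:ℤ)^wn * ch (I-1) wn * binom (t + wn) ((I - w - 0) + wn) := by
      rw [show (w+1).toNat = wn + 1 by omega, Finset.sum_range_succ]
    rw [hsplit]
    have hA : ∑ r ∈ range wn, (-1:ℤ)^r * ch (I-1) r * binom (t + r) ((I - w - 0) + r)
        = Asum wn (I - w - 0) tn := by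
      rw [Asum]
      refine Finset.sum_congr rfl ?_
      intro r _
      rw [ch_congr (by omega : I - 1 = (I - w - 0) + (wn:ℤ) - 1) rfl,
        binom_congr (by omega : t + (r:ℤ) = (tn:ℤ) + r) rfl]
    have hW : (w + 0).toNat = wn := by omega
    rw [hA, hW, Asum_eq_Bsum wn (I - w - 0) tn]
    have hlast : binom (t + (wn:ℤ)) ((I - w - 0) + wn) = binom (t+w) I := by
      exact binom_congr (by omega) (by omega)
    rw [hlast]
    ring
  · -- case α ≥ 1
    rw [Q, if_neg hα0]
    have hα1 : 1 ≤ α := by omega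
    set tn := t.toNat with htn
    set mn := (w + α).toNat with hmn
    rw [term1_eval w t I α ht hI, term2_eval w t I α ht hα hwα, term3_eval w t I α ht hα1]
    have hjoin : (∑ r ∈ range (w+1).toNat, (-1:ℤ)^r * ch (I-1) r * binom (t + r) ((I - w - α) + r))
        + (∑ r ∈ Finset.Ico (w+1).toNat mn, (-1:ℤ)^r * ch (I-1) r * binom (t + r) ((I - w - α) + r))
        = ∑ r ∈ range mn, (-1:ℤ)^r * ch (I-1) r * binom (t + r) ((I - w - α) + r) := by
      simp only [Finset.range_eq_Ico]
      exact Finset.sum_Ico_consecutive _ (by omega) (by omega)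
    have hA : ∑ r ∈ range mn, (-1:ℤ)^r * ch (I-1) r * binom (t + r) ((I - w - α) + r)
        = Asum mn (I - w - α) tn := by
      rw [Asum]
      refine Finset.sum_congr rfl ?_
      intro r _
      rw [ch_congr (by omega : I - 1 = (I - w - α) + (mn:ℤ) - 1) rfl,
        binom_congr (by omega : t + (r:ℤ) = (tn:ℤ) + r) rfl]
    rw [← Asum_eq_Bsum mn (I - w - α) tn, ← hA, ← hjoin]
    ring
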